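/- Let S be a finite collection of pairwise disjoint chains with n ≥ 2 entries in total, let E be the set of all entries, and let σ : E → E be the bijection that reverses each chain, i.e., σ(x) = max C + min C − x where C is the chain of S containing x. Then S is interlaced if and only if for every 1 ≤ a ≤ n−1, the set of the a largest elements of E is not mapped onto itself by σ. -/

import Mathlib

/-- The maximum entry of a finite set of integers (`0` for the empty set). -/
def fmax (C : Finset ℤ) : ℤ := WithBot.unbotD 0 C.max

/-- The minimum entry of a finite set of integers (`0` for the empty set). -/
def fmin (C : Finset ℤ) : ℤ := WithTop.untopD 0 C.min

/-- A *chain* is a nonempty set of integers of the form `{c, c-2, …, c-2k}`. -/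
def IsChainSet (C : Finset ℤ) : Prop :=
  ∃ (c : ℤ) (k : ℕ), C = (Finset.range (k + 1)).image (fun i : ℕ => c - 2 * (i : ℤ))

/-- Two chains with disjoint entries, with maxima `A, B` and minima `a, b`, are *linked*
if `A > B > a` or `B > A > b`. -/
def LinkedChains (C D : Finset ℤ) : Prop :=
  Disjoint C D ∧
    ((fmax D < fmax C ∧ fmin C < fmax D) ∨ (fmax C < fmax D ∧ fmin D < fmax C))

/-- The set of all entries of a collection of chains. -/
def entriesOf (S : Finset (Finset ℤ)) : Finset ℤ := S.biUnion id

/-- A finite collection of pairwise disjoint chains. -/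
def IsChainCollection (S : Finset (Finset ℤ)) : Prop :=
  (∀ C ∈ S, IsChainSet C) ∧ ∀ C ∈ S, ∀ D ∈ S, C ≠ D → Disjoint C D

/-- A collection of pairwise disjoint chains is *interlaced* if any two of its chains are
joined by a finite sequence of chains of the collection in which consecutive chains are
linked. -/
def Interlaced (S : Finset (Finset ℤ)) : Prop :=
  ∀ C ∈ S, ∀ D ∈ S,
    Relation.ReflTransGen (fun X Y => X ∈ S ∧ Y ∈ S ∧ LinkedChains X Y) C D

/-- An *admissible configuration of size `n`*: an interlaced collection of pairwise disjoint
chains of positive integers with `n` entries in total and smallest entry equal to `1`. -/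
def AdmissibleConfig (n : ℕ) (S : Finset (Finset ℤ)) : Prop :=
  IsChainCollection S ∧ Interlaced S ∧ (entriesOf S).card = n ∧
    (∀ x ∈ entriesOf S, 0 < x) ∧ (1 : ℤ) ∈ entriesOf S

lemma le_fmax {C : Finset ℤ} {x : ℤ} (hx : x ∈ C) : x ≤ fmax C := by
  obtain ⟨b, hb⟩ := Finset.max_of_nonempty ⟨x, hx⟩
  have := Finset.le_max hx
  rw [hb] at this
  simpa [fmax, hb] using this

lemma fmax_mem {C : Finset ℤ} (h : C.Nonempty) : fmax C ∈ C := by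
  obtain ⟨b, hb⟩ := Finset.max_of_nonempty h
  have := Finset.mem_of_max hb
  simpa [fmax, hb] using this

lemma fmin_le {C : Finset ℤ} {x : ℤ} (hx : x ∈ C) : fmin C ≤ x := by
  obtain ⟨b, hb⟩ := Finset.min_of_nonempty ⟨x, hx⟩
  have := Finset.min_le hx
  rw [hb] at this
  simpa [fmin, hb] using this

lemma fmin_mem {C : Finset ℤ} (h : C.Nonempty) : fmin C ∈ C := by
  obtain ⟨b, hb⟩ := Finset.min_of_nonempty h
  have := Finset.mem_of_min hb
  simpa [fmin, hb] using this

lemma IsChainSet.nonempty {C : Finset ℤ} (h : IsChainSet C) : C.Nonempty := by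
  obtain ⟨c, k, rfl⟩ := h
  exact ⟨c - 2 * (0 : ℤ), Finset.mem_image.2 ⟨0, by simp, rfl⟩⟩

lemma IsChainSet.rev_mem {C : Finset ℤ} (h : IsChainSet C) {x : ℤ} (hx : x ∈ C) :
    fmax C + fmin C - x ∈ C := by
  obtain ⟨c, k, rfl⟩ := h
  set C := (Finset.range (k + 1)).image (fun i : ℕ => c - 2 * (i : ℤ)) with hC
  have hmax : fmax C = c := by
    have h1 : c ∈ C := Finset.mem_image.2 ⟨0, by simp, by simp⟩
    have h2 : fmax C ∈ C := fmax_mem ⟨c, h1⟩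
    obtain ⟨i, hi, hieq⟩ := Finset.mem_image.1 h2
    have := le_fmax h1
    omega
  have hmin : fmin C = c - 2 * k := by
    have h1 : c - 2 * (k : ℤ) ∈ C := Finset.mem_image.2 ⟨k, by simp, rfl⟩
    have h2 : fmin C ∈ C := fmin_mem ⟨_, h1⟩
    obtain ⟨i, hi, hieq⟩ := Finset.mem_image.1 h2
    have := fmin_le h1
    have hik : i ≤ k := by simpa [Nat.lt_succ_iff] using Finset.mem_range.1 hi
    have : (i : ℤ) ≤ (k : ℤ) := by exact_mod_cast hik
    omega
  obtain ⟨i, hi, rfl⟩ := Finset.mem_image.1 hx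
  have hik : i ≤ k := by simpa [Nat.lt_succ_iff] using Finset.mem_range.1 hi
  refine Finset.mem_image.2 ⟨k - i, Finset.mem_range.2 (by omega), ?_⟩
  have hcast : ((k - i : ℕ) : ℤ) = (k : ℤ) - (i : ℤ) := by
    exact_mod_cast Int.ofNat_sub hik
  rw [hmax, hmin, hcast]
  ring

/-- **Proposition 3.1 (combinatorial form).** Let `S` be a finite collection of pairwise
disjoint chains with `n ≥ 2` entries in total, and let `σ` be the bijection of the entry set
that reverses each chain, `σ x = max C + min C - x` for `x` in the chain `C`.  Then `S` is
interlaced if and only if for every `1 ≤ a ≤ n - 1` the set of the `a` largest entries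
(equivalently, every upward-closed subset of the entries of cardinality `a`) is not mapped
onto itself by `σ`. -/
theorem interlaced_iff_no_invariant_top_segment (S : Finset (Finset ℤ))
    (hS : IsChainCollection S) (n : ℕ) (hn : 2 ≤ n) (hcard : (entriesOf S).card = n)
    (σ : ℤ → ℤ) (hσ : ∀ C ∈ S, ∀ x ∈ C, σ x = fmax C + fmin C - x) :
    Interlaced S ↔
      ∀ T : Finset ℤ, T ⊆ entriesOf S →
        (∀ x ∈ T, ∀ y ∈ entriesOf S, x ≤ y → y ∈ T) →
        1 ≤ T.card → T.card ≤ n - 1 → T.image σ ≠ T := by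
  classical
  obtain ⟨hchain, hdisj⟩ := hS
  have hsubE : ∀ C ∈ S, C ⊆ entriesOf S := fun C hC => Finset.subset_biUnion_of_mem id hC
  have hmemE : ∀ x ∈ entriesOf S, ∃ C ∈ S, x ∈ C := by
    intro x hx
    simpa [entriesOf] using hx
  have himgC : ∀ C ∈ S, C.image σ = C := by
    intro C hC
    apply Finset.eq_of_subset_of_card_le
    · intro y hy
      obtain ⟨x, hx, rfl⟩ := Finset.mem_image.1 hy
      rw [hσ C hC x hx]
      exact (hchain C hC).rev_mem hx
    · rw [Finset.card_image_of_injOn]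
      intro a ha b hb hab
      rw [hσ C hC a ha, hσ C hC b hb] at hab
      omega
  constructor
  · -- forward direction
    intro hI T hTsub hup hc1 hc2 himg
    have hstep1 : ∀ C ∈ S, ∀ x ∈ C, x ∈ T → C ⊆ T := by
      intro C hC x hxC hxT
      have hCne : C.Nonempty := (hchain C hC).nonempty
      have hmaxT : fmax C ∈ T :=
        hup x hxT (fmax C) (hsubE C hC (fmax_mem hCne)) (le_fmax hxC)
      have hminT : fmin C ∈ T := by
        have hm : σ (fmax C) ∈ T.image σ := Finset.mem_image_of_mem σ hmaxT
        rw [himg] at hm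
        have heq : fmax C + fmin C - fmax C = fmin C := by ring
        rwa [hσ C hC _ (fmax_mem hCne), heq] at hm
      intro z hz
      exact hup (fmin C) hminT z (hsubE C hC hz) (fmin_le hz)
    obtain ⟨t, ht⟩ := Finset.card_pos.1 hc1
    obtain ⟨C₀, hC₀, htC₀⟩ := hmemE t (hTsub ht)
    have hC₀T : C₀ ⊆ T := hstep1 C₀ hC₀ t htC₀ ht
    obtain ⟨e, heE, heT⟩ : ∃ e ∈ entriesOf S, e ∉ T := by
      by_contra h
      push_neg at h
      have : T = entriesOf S := Finset.Subset.antisymm hTsub (fun e he => h e he)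
      rw [this, hcard] at hc2
      omega
    obtain ⟨D₀, hD₀, heD₀⟩ := hmemE e heE
    have hall : ∀ X, Relation.ReflTransGen
        (fun X Y => X ∈ S ∧ Y ∈ S ∧ LinkedChains X Y) C₀ X → X ⊆ T := by
      intro X hX
      induction hX with
      | refl => exact hC₀T
      | @tail b c hbc step ih =>
        obtain ⟨hbS, hcS, _, hcase⟩ := step
        have hbne : b.Nonempty := (hchain b hbS).nonempty
        have hcne : c.Nonempty := (hchain c hcS).nonempty
        have hmaxcT : fmax c ∈ T := by
          rcases hcase with ⟨h1, h2⟩ | ⟨h1, h2⟩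
          · exact hup (fmin b) (ih (fmin_mem hbne)) (fmax c)
              (hsubE c hcS (fmax_mem hcne)) h2.le
          · exact hup (fmax b) (ih (fmax_mem hbne)) (fmax c)
              (hsubE c hcS (fmax_mem hcne)) h1.le
        exact hstep1 c hcS (fmax c) (fmax_mem hcne) hmaxcT
    exact heT (hall D₀ (hI C₀ hC₀ D₀ hD₀) heD₀)
  · -- backward direction
    intro hT
    by_contra hnI
    unfold Interlaced at hnI
    push_neg at hnI
    obtain ⟨C1, hC1, D1, hD1, hnR⟩ := hnI
    set r := fun X Y : Finset ℤ => X ∈ S ∧ Y ∈ S ∧ LinkedChains X Y with hr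
    have hrsymm : ∀ {X Y}, r X Y → r Y X := by
      rintro X Y ⟨hX, hY, hd, hcase⟩
      exact ⟨hY, hX, hd.symm, hcase.symm⟩
    have hsymmRT : ∀ {X Y}, Relation.ReflTransGen r X Y → Relation.ReflTransGen r Y X := by
      intro X Y h
      induction h with
      | refl => exact Relation.ReflTransGen.refl
      | @tail b c hbc step ih =>
        exact Relation.ReflTransGen.trans (Relation.ReflTransGen.single (hrsymm step)) ih
    have hEne : (entriesOf S).Nonempty := Finset.card_pos.1 (by omega)
    set M := fmax (entriesOf S) with hM
    have hME : M ∈ entriesOf S := fmax_mem hEne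
    obtain ⟨CM, hCM, hMCM⟩ := hmemE M hME
    set A := S.filter (fun X => Relation.ReflTransGen r CM X) with hA
    set T := A.biUnion id with hT'
    have hmemT : ∀ {Z}, Z ∈ S → Relation.ReflTransGen r CM Z → ∀ {z}, z ∈ Z → z ∈ T := by
      intro Z hZ hreach z hz
      exact Finset.mem_biUnion.2 ⟨Z, Finset.mem_filter.2 ⟨hZ, hreach⟩, hz⟩
    have hTmem_ex : ∀ z ∈ T, ∃ Z ∈ S, Relation.ReflTransGen r CM Z ∧ z ∈ Z := by
      intro z hz
      obtain ⟨Z, hZ, hzZ⟩ := Finset.mem_biUnion.1 hz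
      obtain ⟨hZS, hZr⟩ := Finset.mem_filter.1 hZ
      exact ⟨Z, hZS, hZr, hzZ⟩
    have hTE : T ⊆ entriesOf S := by
      intro z hz
      obtain ⟨Z, hZS, _, hzZ⟩ := hTmem_ex z hz
      exact hsubE Z hZS hzZ
    have hnotT : ∀ {y Z}, Z ∈ S → ¬ Relation.ReflTransGen r CM Z → y ∈ Z → y ∉ T := by
      intro y Z hZ hnr hyZ hyT
      obtain ⟨Z', hZ'S, hZ'r, hyZ'⟩ := hTmem_ex y hyT
      have hne : Z ≠ Z' := by rintro rfl; exact hnr hZ'r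
      exact (Finset.disjoint_left.1 (hdisj Z hZ Z' hZ'S hne)) hyZ hyZ'
    -- upward closure
    have hup : ∀ x ∈ T, ∀ y ∈ entriesOf S, x ≤ y → y ∈ T := by
      intro x hxT y hyE hxy
      by_contra hyT
      obtain ⟨Dy, hDyS, hyDy⟩ := hmemE y hyE
      have hDynr : ¬ Relation.ReflTransGen r CM Dy := fun h => hyT (hmemT hDyS h hyDy)
      obtain ⟨Cx, hCxS, hCxr, hxCx⟩ := hTmem_ex x hxT
      have cross : ∀ Z, Relation.ReflTransGen r CM Z → fmax Z < y →
          ∃ Cc, Cc ∈ S ∧ Relation.ReflTransGen r CM Cc ∧ y < fmax Cc ∧ fmin Cc < y := by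
        intro Z hZr
        induction hZr with
        | refl =>
          intro hlt
          exfalso
          have h1 : y ≤ M := le_fmax hyE
          have h2 : M ≤ fmax CM := le_fmax hMCM
          omega
        | @tail b c hbc step ih =>
          intro hlt
          obtain ⟨hbS, hcS, _, hcase⟩ := step
          by_cases hb : fmax b < y
          · exact ih hb
          · have hbT' : fmax b ∈ T := hmemT hbS hbc (fmax_mem (hchain b hbS).nonempty)
            have hbney : y ≠ fmax b := fun h => hyT (h ▸ hbT')
            have hby : y < fmax b := lt_of_le_of_ne (not_lt.1 hb) hbney
            rcases hcase with ⟨h1, h2⟩ | ⟨h1, h2⟩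
            · exact ⟨b, hbS, hbc, hby, by omega⟩
            · omega
      have key : ∃ Cc, Cc ∈ S ∧ Relation.ReflTransGen r CM Cc ∧
          y < fmax Cc ∧ fmin Cc < y := by
        by_cases hc : fmax Cx < y
        · exact cross Cx hCxr hc
        · have hfT : fmax Cx ∈ T := hmemT hCxS hCxr (fmax_mem (hchain Cx hCxS).nonempty)
          have hney : y ≠ fmax Cx := fun h => hyT (h ▸ hfT)
          have h1 : y < fmax Cx := lt_of_le_of_ne (not_lt.1 hc) hney
          have h2 : fmin Cx ≤ x := fmin_le hxCx
          have hxney : x ≠ y := fun h => hyT (h ▸ hxT)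
          exact ⟨Cx, hCxS, hCxr, h1, by omega⟩
      obtain ⟨Cc, hCcS, hCcr, hy1, hy2⟩ := key
      have hne : Cc ≠ Dy := fun h => hDynr (h ▸ hCcr)
      have hdisjCD : Disjoint Cc Dy := hdisj Cc hCcS Dy hDyS hne
      have hmaxne : fmax Cc ≠ fmax Dy := by
        intro h
        have h1 : fmax Cc ∈ Cc := fmax_mem (hchain Cc hCcS).nonempty
        have h2 : fmax Dy ∈ Dy := fmax_mem (hchain Dy hDyS).nonempty
        rw [← h] at h2
        exact (Finset.disjoint_left.1 hdisjCD) h1 h2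
      have hlink : LinkedChains Cc Dy := by
        refine ⟨hdisjCD, ?_⟩
        rcases lt_or_gt_of_ne hmaxne with h | h
        · right
          exact ⟨h, lt_of_le_of_lt (fmin_le hyDy) hy1⟩
        · left
          exact ⟨h, lt_of_lt_of_le hy2 (le_fmax hyDy)⟩
      exact hDynr (hCcr.tail ⟨hCcS, hDyS, hlink⟩)
    -- σ-invariance
    have himgT : T.image σ = T := by
      rw [hT', Finset.biUnion_image]
      exact Finset.biUnion_congr rfl (fun Z hZ => himgC Z (Finset.mem_filter.1 hZ).1)
    -- cardinality bounds
    have hMT : M ∈ T := hmemT hCM Relation.ReflTransGen.refl hMCM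
    have h1 : 1 ≤ T.card := Finset.card_pos.2 ⟨M, hMT⟩
    obtain ⟨W, hWS, hWnr⟩ : ∃ W ∈ S, ¬ Relation.ReflTransGen r CM W := by
      by_cases h : Relation.ReflTransGen r CM C1
      · refine ⟨D1, hD1, fun h2 => ?_⟩
        exact hnR (Relation.ReflTransGen.trans (hsymmRT h) h2)
      · exact ⟨C1, hC1, h⟩
    have heW : fmax W ∈ W := fmax_mem (hchain W hWS).nonempty
    have heE : fmax W ∈ entriesOf S := hsubE W hWS heW
    have heT : fmax W ∉ T := hnotT hWS hWnr heW
    have h2 : T.card ≤ n - 1 := by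
      have hlt : T.card < (entriesOf S).card :=
        Finset.card_lt_card ((Finset.ssubset_iff_of_subset hTE).2 ⟨fmax W, heE, heT⟩)
      omega
    exact hT T hTE hup h1 h2 himgT
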